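/- For a matrix CUR decomposition, if X = C U⁺ R holds with C = X(:,J), R = X(I,:), U = X(I,J), then rank(C) = rank(R) = rank(U) = rank(X). -/

import Mathlib

open Matrix

/-- `B` is the Moore–Penrose pseudoinverse of `A`. -/
def IsMoorePenroseInv {m n : Type*} [Fintype m] [Fintype n]
    (A : Matrix m n ℝ) (B : Matrix n m ℝ) : Prop :=
  A * B * A = A ∧ B * A * B = B ∧ (A * B)ᵀ = A * B ∧ (B * A)ᵀ = B * A

/-- If the CUR decomposition `X = C U⁺ R` holds, then
`rank C = rank R = rank U = rank X`. -/
theorem matrix_CUR_ranks {d₁ d₂ : ℕ} (X : Matrix (Fin d₁) (Fin d₂) ℝ)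
    (I : Finset (Fin d₁)) (J : Finset (Fin d₂))
    (C : Matrix (Fin d₁) {j // j ∈ J} ℝ)
    (R : Matrix {i // i ∈ I} (Fin d₂) ℝ)
    (U : Matrix {i // i ∈ I} {j // j ∈ J} ℝ)
    (hC : ∀ i j, C i j = X i j.1)
    (hR : ∀ i j, R i j = X i.1 j)
    (hU : ∀ i j, U i j = X i.1 j.1)
    (Up : Matrix {j // j ∈ J} {i // i ∈ I} ℝ)
    (hUp : IsMoorePenroseInv U Up)
    (hX : X = C * Up * R) :
    C.rank = X.rank ∧ R.rank = X.rank ∧ U.rank = X.rank := by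
  -- selection matrices
  set P : Matrix {i // i ∈ I} (Fin d₁) ℝ := fun i' i => if i'.1 = i then 1 else 0 with hP
  set E : Matrix (Fin d₂) {j // j ∈ J} ℝ := fun j j' => if j = j'.1 then 1 else 0 with hE
  have hCE : C = X * E := by
    ext i j'
    rw [mul_apply]
    simp [hC, mul_apply, hE, mul_ite, mul_one, mul_zero]
  have hRP : R = P * X := by
    ext i' j
    rw [mul_apply]
    simp [hR, mul_apply, hP, ite_mul, one_mul, zero_mul]
  have hPC : U = P * C := by
    ext i' j'
    rw [mul_apply]
    simp [hU, hC, mul_apply, hP, ite_mul, one_mul, zero_mul]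
  -- R = U * Up * R
  have hRUR : U * Up * R = R := by
    calc U * Up * R = (P * C) * Up * R := by rw [← hPC]
    _ = P * (C * Up * R) := by simp only [Matrix.mul_assoc]
    _ = P * X := by rw [← hX]
    _ = R := hRP.symm
  have hX2 : X = (C * Up) * (U * (Up * R)) := by
    calc X = C * Up * R := hX
    _ = C * Up * (U * Up * R) := by rw [hRUR]
    _ = (C * Up) * (U * (Up * R)) := by simp only [Matrix.mul_assoc]
  have h1 : C.rank ≤ X.rank := by rw [hCE]; exact rank_mul_le_left X E
  have h2 : R.rank ≤ X.rank := by rw [hRP]; exact rank_mul_le_right P X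
  have h3 : U.rank ≤ C.rank := by rw [hPC]; exact rank_mul_le_right P C
  have h4 : X.rank ≤ U.rank := by
    rw [hX2]
    exact (rank_mul_le_right (C * Up) (U * (Up * R))).trans
      (rank_mul_le_left U (Up * R))
  have h5 : X.rank ≤ C.rank := by
    rw [hX]
    exact (rank_mul_le_left (C * Up) R).trans (rank_mul_le_left C Up)
  have h6 : X.rank ≤ R.rank := by rw [hX]; exact rank_mul_le_right (C * Up) R
  exact ⟨le_antisymm h1 h5, le_antisymm (h2) h6,
    le_antisymm (h3.trans h1) h4⟩
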